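/- Let σ_θη > 0, σ_η > 0, σ_γ > 0 be real constants. The function BR(b) = σ_θη / (σ_η² + b² σ_γ²) has exactly one fixed point b* in ℝ, and b* > 0. In particular, for σ_θη = σ_η = σ_γ = 1, b* is the unique real root of the cubic b³ + b − 1. -/

import Mathlib

/-- the best-response map `BR(b) = σθη / (ση² + b²σγ²)` has exactly one
fixed point, which is positive; for unit parameters, the fixed points are exactly the
real roots of `b³ + b − 1`. -/
theorem br_unique_fixed_point (sθη sη sγ : ℝ) (h1 : 0 < sθη) (h2 : 0 < sη) (h3 : 0 < sγ) :
    (∃! b : ℝ, b = sθη / (sη ^ 2 + b ^ 2 * sγ ^ 2)) ∧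
      (∀ b : ℝ, b = sθη / (sη ^ 2 + b ^ 2 * sγ ^ 2) → 0 < b) ∧
      (sθη = 1 → sη = 1 → sγ = 1 →
        ∀ b : ℝ, b = sθη / (sη ^ 2 + b ^ 2 * sγ ^ 2) ↔ b ^ 3 + b - 1 = 0) := by
  have hden : ∀ b : ℝ, 0 < sη ^ 2 + b ^ 2 * sγ ^ 2 := by
    intro b; positivity
  -- fixed point equation ↔ cubic
  have key : ∀ b : ℝ, (b = sθη / (sη ^ 2 + b ^ 2 * sγ ^ 2)) ↔
      sγ ^ 2 * b ^ 3 + sη ^ 2 * b - sθη = 0 := by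
    intro b
    rw [eq_div_iff (ne_of_gt (hden b))]
    constructor
    · intro h; nlinarith [h]
    · intro h; nlinarith [h]
  -- positivity of any fixed point
  have hpos : ∀ b : ℝ, b = sθη / (sη ^ 2 + b ^ 2 * sγ ^ 2) → 0 < b := by
    intro b hb
    rw [hb]
    exact div_pos h1 (hden b)
  -- existence via IVT
  have hcont : Continuous (fun b : ℝ => sγ ^ 2 * b ^ 3 + sη ^ 2 * b - sθη) := by
    continuity
  set b0 : ℝ := sθη / sη ^ 2 with hb0
  have hb0pos : 0 < b0 := div_pos h1 (by positivity)
  have hf0 : sγ ^ 2 * (0:ℝ) ^ 3 + sη ^ 2 * 0 - sθη ≤ 0 := by nlinarith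
  have hfb0 : 0 ≤ sγ ^ 2 * b0 ^ 3 + sη ^ 2 * b0 - sθη := by
    have : sη ^ 2 * b0 = sθη := by
      rw [hb0]; field_simp
    nlinarith [pow_pos hb0pos 3, sq_nonneg sγ]
  have hIVT := intermediate_value_Icc (le_of_lt hb0pos)
      (hcont.continuousOn (s := Set.Icc 0 b0))
  have hmem : (0:ℝ) ∈ (fun b : ℝ => sγ ^ 2 * b ^ 3 + sη ^ 2 * b - sθη) '' Set.Icc 0 b0 :=
    hIVT ⟨hf0, hfb0⟩
  obtain ⟨b, _, hb⟩ := hmem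
  have hb' : sγ ^ 2 * b ^ 3 + sη ^ 2 * b - sθη = 0 := hb
  refine ⟨⟨b, (key b).mpr hb', ?_⟩, hpos, ?_⟩
  · intro c hc
    have hc' := (key c).mp hc
    have hq : 0 < sγ ^ 2 * (c ^ 2 + c * b + b ^ 2) + sη ^ 2 := by
      nlinarith [sq_nonneg (c + b), sq_nonneg c, sq_nonneg b, sq_nonneg sγ, pow_pos h2 2]
    by_contra hne
    rcases lt_or_gt_of_ne hne with h | h
    · have := mul_pos (sub_pos.mpr h) hq
      nlinarith
    · have := mul_pos (sub_pos.mpr h) hq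
      nlinarith
  · intro hθ hη hγ c
    rw [key c, hθ, hη, hγ]
    constructor <;> intro h <;> nlinarith [h]
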